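/- Let A be the set of prime numbers and N ∈ ℕ. If L, U ∈ ℝ satisfy 0 ≤ L < E[τ_{N+i}] < U for all 1 ≤ i ≤ 6, then E_{N,0}[τ_0] + L·SP_N(0) < E[τ] < E_{N,0}[τ_0] + U·SP_N(0). In particular, E[τ] is approximated by E_{N,0}[τ_0] with error at most SP_N(0)·(U − L). -/

import Mathlib

open MeasureTheory ProbabilityTheory
open scoped ENNReal NNReal

noncomputable section

/-- The cumulative sum `S_t^(s) = s + X_1 + ... + X_t`, where the die faces are
`ω 0 + 1, ω 1 + 1, ...` (each in `{1,...,6}`). -/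
def partialSum (s : ℕ) (ω : ℕ → Fin 6) (t : ℕ) : ℕ :=
  s + ∑ j ∈ Finset.range t, ((ω j : ℕ) + 1)

/-- The hitting time `τ_s = inf {t : S_t^(s) ∈ A}`, with value `⊤` if the sum never hits `A`. -/
def hitTime (A : Set ℕ) (s : ℕ) (ω : ℕ → Fin 6) : ℕ∞ :=
  sInf {t : ℕ∞ | ∃ n : ℕ, t = (n : ℕ∞) ∧ partialSum s ω n ∈ A}

/-- The expectation `E[τ_s]`, as a Lebesgue integral with values in `[0,∞]`. -/
def hitExp (P : Measure (ℕ → Fin 6)) (A : Set ℕ) (s : ℕ) : ℝ≥0∞ :=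
  ∫⁻ ω, (hitTime A s ω : ℝ≥0∞) ∂P

open Classical in
/-- The truncated expectation `E_{N,B}[τ_s]`, defined by backward recursion. -/
def EC (A : Set ℕ) (N : ℕ) (B : ℝ) (s : ℕ) : ℝ :=
  if N < s then B
  else if s ∈ A then 0
  else 1 + (1/6) * ∑ i ∈ Finset.range 6, EC A N B (s + i + 1)
termination_by N + 1 - s
decreasing_by omega

open Classical in
/-- The survival probability `SP_N(s)`, defined by backward recursion. -/
def SP (A : Set ℕ) (N : ℕ) (s : ℕ) : ℝ :=
  if N < s then 1
  else if s ∈ A then 0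
  else (1/6) * ∑ i ∈ Finset.range 6, SP A N (s + i + 1)
termination_by N + 1 - s
decreasing_by omega

namespace SqueezeAux

lemma partialSum_congr {s k : ℕ} {ω ω' : ℕ → Fin 6} (h : ∀ j < k, ω j = ω' j) :
    partialSum s ω k = partialSum s ω' k := by
  unfold partialSum
  congr 1
  exact Finset.sum_congr rfl fun j hj => by rw [h j (Finset.mem_range.1 hj)]

lemma lt_hitTime_iff {A : Set ℕ} {s t : ℕ} {ω : ℕ → Fin 6} :
    (t : ℕ∞) < hitTime A s ω ↔ ∀ k ≤ t, partialSum s ω k ∉ A := by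
  constructor
  · intro h k hk hA
    have h1 : hitTime A s ω ≤ (k : ℕ∞) := sInf_le ⟨k, rfl, hA⟩
    have h2 : (k : ℕ∞) ≤ (t : ℕ∞) := Nat.cast_le.2 hk
    exact absurd (h.trans_le (h1.trans h2)).false (by simp)
  · intro h
    have h1 : ((t + 1 : ℕ) : ℕ∞) ≤ hitTime A s ω := by
      apply le_sInf
      rintro x ⟨n, rfl, hn⟩
      have : t < n := by
        by_contra hc
        exact h n (by omega) hn
      exact_mod_cast Nat.cast_le.2 (by omega : t + 1 ≤ n)
    calc (t : ℕ∞) < ((t + 1 : ℕ) : ℕ∞) := by exact_mod_cast Nat.lt_succ_self t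
    _ ≤ _ := h1

lemma hitTime_of_mem {A : Set ℕ} {s : ℕ} (h : s ∈ A) (ω : ℕ → Fin 6) :
    hitTime A s ω = 0 := by
  refine le_antisymm ?_ (zero_le)
  exact sInf_le ⟨0, by simp, by simpa [partialSum] using h⟩

def survSet (A : Set ℕ) (s t : ℕ) : Set (ℕ → Fin 6) :=
  {ω | ∀ k ≤ t, partialSum s ω k ∉ A}

lemma measurable_partialSum (s k : ℕ) : Measurable fun ω : ℕ → Fin 6 => partialSum s ω k := by
  unfold partialSum
  exact measurable_const.add <| Finset.measurable_sum _ fun j _ =>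
    (measurable_from_top (f := fun x : Fin 6 => (x : ℕ) + 1)).comp (measurable_pi_apply j)

lemma measurableSet_survSet (A : Set ℕ) (s t : ℕ) : MeasurableSet (survSet A s t) := by
  have : survSet A s t = ⋂ (k : ℕ) (_ : k ≤ t), (fun ω => partialSum s ω k) ⁻¹' Aᶜ := by
    ext ω; simp [survSet, Set.mem_iInter]
  rw [this]
  exact MeasurableSet.iInter fun k => MeasurableSet.iInter fun _ =>
    (measurable_partialSum s k) ((Set.to_countable _).measurableSet)

lemma coe_eq_tsum (x : ℕ∞) :
    (x : ℝ≥0∞) = ∑' t : ℕ, if (t : ℕ∞) < x then 1 else 0 := by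
  cases x with
  | top =>
    have : ∀ t : ℕ, (if (t : ℕ∞) < ⊤ then (1:ℝ≥0∞) else 0) = 1 := fun t => by
      simp [lt_top_iff_ne_top]
    rw [tsum_congr this]
    simp [ENNReal.tsum_const_eq_top_of_ne_zero one_ne_zero]
  | coe n =>
    have : ∀ t : ℕ, (if (t : ℕ∞) < (n : ℕ∞) then (1:ℝ≥0∞) else 0)
        = if t < n then 1 else 0 := fun t => by
      congr 1
      simp [Nat.cast_lt]
    rw [tsum_congr this, tsum_eq_sum (s := Finset.range n)
      (fun t ht => by simp [Finset.mem_range.not.1 ht])]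
    simp only [Finset.sum_ite_eq', Finset.sum_boole]
    rw [Finset.filter_true_of_mem fun x hx => Finset.mem_range.1 hx, Finset.card_range]
    simp


lemma hitExp_eq_tsum (P : Measure (ℕ → Fin 6)) (A : Set ℕ) (s : ℕ) :
    hitExp P A s = ∑' t : ℕ, P (survSet A s t) := by
  unfold hitExp
  have h1 : ∀ ω, ((hitTime A s ω : ℝ≥0∞))
      = ∑' t : ℕ, (survSet A s t).indicator (1 : (ℕ → Fin 6) → ℝ≥0∞) ω := by
    intro ω
    rw [coe_eq_tsum]
    refine tsum_congr fun t => ?_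
    by_cases h : (t : ℕ∞) < hitTime A s ω
    · rw [if_pos h, Set.indicator_of_mem (show ω ∈ survSet A s t from lt_hitTime_iff.1 h)]; rfl
    · rw [if_neg h, Set.indicator_of_notMem (fun hc : ω ∈ survSet A s t => h (lt_hitTime_iff.2 hc))]
  rw [lintegral_congr h1, lintegral_tsum fun t =>
    ((measurable_one.indicator (measurableSet_survSet A s t)).aemeasurable)]
  exact tsum_congr fun t => lintegral_indicator_one (measurableSet_survSet A s t)

def extFn {t : ℕ} (v : Fin t → Fin 6) : ℕ → Fin 6 := fun j => if h : j < t then v ⟨j, h⟩ else 0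

open Classical in
def good (A : Set ℕ) (s t : ℕ) : Finset (Fin t → Fin 6) :=
  Finset.univ.filter fun v => ∀ k ≤ t, partialSum s (extFn v) k ∉ A

lemma mem_good {A : Set ℕ} {s t : ℕ} {v : Fin t → Fin 6} :
    v ∈ good A s t ↔ ∀ k ≤ t, partialSum s (extFn v) k ∉ A := by
  simp [good]

def cylSet {t : ℕ} (v : Fin t → Fin 6) : Set (ℕ → Fin 6) :=
  ⋂ j ∈ Finset.range t, {ω : ℕ → Fin 6 | ω j = extFn v j}

lemma mem_cylSet {t : ℕ} {v : Fin t → Fin 6} {ω : ℕ → Fin 6} :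
    ω ∈ cylSet v ↔ ∀ j < t, ω j = extFn v j := by
  simp [cylSet]

lemma survSet_eq_biUnion (A : Set ℕ) (s t : ℕ) :
    survSet A s t = ⋃ v ∈ good A s t, cylSet v := by
  ext ω
  simp only [Set.mem_iUnion, exists_prop]
  constructor
  · intro hω
    refine ⟨fun j => ω j, ?_, ?_⟩
    · rw [mem_good]
      intro k hk
      have := partialSum_congr (s := s) (k := k) (ω := extFn fun j : Fin t => ω j) (ω' := ω)
        (fun j hj => by simp [extFn, dif_pos (lt_of_lt_of_le hj hk)])
      rw [this]
      exact hω k hk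
    · rw [mem_cylSet]
      intro j hj
      simp [extFn, dif_pos hj]
  · rintro ⟨v, hv, hω⟩
    intro k hk
    have := partialSum_congr (s := s) (k := k) (ω := ω) (ω' := extFn v)
      (fun j hj => mem_cylSet.1 hω j (lt_of_lt_of_le hj hk))
    rw [this]
    exact mem_good.1 hv k hk

lemma measurableSet_cylSet {t : ℕ} (v : Fin t → Fin 6) : MeasurableSet (cylSet v) := by
  refine MeasurableSet.biInter (Set.to_countable _) fun j _ => ?_
  exact (measurable_pi_apply j) (measurableSet_singleton _)

lemma meas_cylSet (P : Measure (ℕ → Fin 6)) [IsProbabilityMeasure P]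
    (hIndep : iIndepFun (fun n (ω : ℕ → Fin 6) => ω n) P)
    (hUnif : ∀ (n : ℕ) (i : Fin 6), P {ω | ω n = i} = 1 / 6)
    {t : ℕ} (v : Fin t → Fin 6) :
    P (cylSet v) = (1 / 6 : ℝ≥0∞) ^ t := by
  have := hIndep.meas_biInter (S := Finset.range t)
    (s := fun j => {ω : ℕ → Fin 6 | ω j = extFn v j})
    (fun j _ => ⟨{extFn v j}, measurableSet_singleton _, by ext ω; simp⟩)
  rw [cylSet, this]
  rw [Finset.prod_congr rfl fun j _ => hUnif j (extFn v j), Finset.prod_const,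
    Finset.card_range]

lemma meas_survSet (P : Measure (ℕ → Fin 6)) [IsProbabilityMeasure P]
    (hIndep : iIndepFun (fun n (ω : ℕ → Fin 6) => ω n) P)
    (hUnif : ∀ (n : ℕ) (i : Fin 6), P {ω | ω n = i} = 1 / 6) (A : Set ℕ) (s t : ℕ) :
    P (survSet A s t) = ((good A s t).card : ℝ≥0∞) * (1 / 6 : ℝ≥0∞) ^ t := by
  rw [survSet_eq_biUnion, measure_biUnion_finset ?_ fun v _ => measurableSet_cylSet v]
  · rw [Finset.sum_congr rfl fun v _ => meas_cylSet P hIndep hUnif v, Finset.sum_const,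
      nsmul_eq_mul]
  · intro v hv w hw hvw
    refine Set.disjoint_left.2 fun ω h1 h2 => hvw ?_
    funext j
    have e1 := mem_cylSet.1 h1 j j.2
    have e2 := mem_cylSet.1 h2 j j.2
    rw [e1] at e2
    simpa [extFn, dif_pos j.2] using e2


open Classical in
lemma good_zero_card (A : Set ℕ) (s : ℕ) :
    ((good A s 0).card : ℝ≥0∞) = if s ∈ A then 0 else 1 := by
  classical
  have h0 : ∀ v : Fin 0 → Fin 6, (∀ k ≤ 0, partialSum s (extFn v) k ∉ A) ↔ s ∉ A := by
    intro v
    constructor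
    · intro h; simpa [partialSum] using h 0 le_rfl
    · intro h k hk; interval_cases k; simpa [partialSum]
  by_cases hs : s ∈ A
  · rw [good, Finset.filter_false_of_mem fun v _ => by rw [h0 v]; exact not_not_intro hs]
    simp [hs]
  · rw [good, Finset.filter_true_of_mem fun v _ => (h0 v).2 hs]
    simp [if_neg hs]

lemma partialSum_extFn_succ {t : ℕ} (v : Fin (t + 1) → Fin 6) (s k : ℕ) (hk : k ≤ t) :
    partialSum s (extFn v) (k + 1)
      = partialSum (s + (v 0 : ℕ) + 1) (extFn (Fin.tail v)) k := by
  unfold partialSum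
  rw [Finset.sum_range_succ']
  have h0 : ((extFn v 0 : ℕ) + 1) = (v 0 : ℕ) + 1 := by
    simp [extFn]
  have hterm : ∀ j < k, ((extFn v (j + 1) : ℕ) + 1) = ((extFn (Fin.tail v) j : ℕ) + 1) := by
    intro j hj
    have hjt : j < t := lt_of_lt_of_le hj hk
    have hjt1 : j + 1 < t + 1 := by omega
    simp only [extFn, dif_pos hjt, dif_pos hjt1]
    rfl
  rw [Finset.sum_congr rfl fun j hj => hterm j (Finset.mem_range.1 hj), h0]
  ring

lemma mem_good_succ {A : Set ℕ} {s t : ℕ} (hs : s ∉ A) {v : Fin (t + 1) → Fin 6} :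
    v ∈ good A s (t + 1) ↔ Fin.tail v ∈ good A (s + (v 0 : ℕ) + 1) t := by
  rw [mem_good, mem_good]
  constructor
  · intro h k hk
    rw [← partialSum_extFn_succ v s k hk]
    exact h (k + 1) (by omega)
  · intro h k hk
    match k with
    | 0 => simpa [partialSum]
    | k + 1 =>
      rw [partialSum_extFn_succ v s k (by omega)]
      exact h k (by omega)

lemma good_card_succ (A : Set ℕ) {s : ℕ} (t : ℕ) (hs : s ∉ A) :
    (good A s (t + 1)).card = ∑ i : Fin 6, (good A (s + (i : ℕ) + 1) t).card := by
  classical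
  rw [← Finset.card_sigma]
  refine Finset.card_bij (fun v _ => (⟨v 0, Fin.tail v⟩ : Σ _ : Fin 6, Fin t → Fin 6))
    ?_ ?_ ?_
  · intro v hv
    rw [Finset.mem_sigma]
    exact ⟨Finset.mem_univ _, (mem_good_succ hs).1 hv⟩
  · intro v hv w hw h
    have h1 : v 0 = w 0 := congrArg Sigma.fst h
    have h2' : Fin.tail v = Fin.tail w := congrArg Sigma.snd h
    rw [← Fin.cons_self_tail v, ← Fin.cons_self_tail w, h1, h2']
  · rintro ⟨i, w⟩ hw
    rw [Finset.mem_sigma] at hw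
    refine ⟨Fin.cons i w, ?_, ?_⟩
    · rw [mem_good_succ hs]
      simpa [Fin.tail_cons] using hw.2
    · simp [Fin.tail_cons]

lemma hitExp_formula (P : Measure (ℕ → Fin 6)) [IsProbabilityMeasure P]
    (hIndep : iIndepFun (fun n (ω : ℕ → Fin 6) => ω n) P)
    (hUnif : ∀ (n : ℕ) (i : Fin 6), P {ω | ω n = i} = 1 / 6) (A : Set ℕ) (s : ℕ) :
    hitExp P A s = ∑' t : ℕ, ((good A s t).card : ℝ≥0∞) * (1 / 6 : ℝ≥0∞) ^ t := by
  rw [hitExp_eq_tsum]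
  exact tsum_congr fun t => meas_survSet P hIndep hUnif A s t

lemma hitExp_of_mem (P : Measure (ℕ → Fin 6)) (A : Set ℕ) {s : ℕ} (hs : s ∈ A) :
    hitExp P A s = 0 := by
  unfold hitExp
  rw [lintegral_congr fun ω => by rw [hitTime_of_mem hs ω]]
  simp

set_option maxHeartbeats 1000000 in
lemma hitExp_rec (P : Measure (ℕ → Fin 6)) [IsProbabilityMeasure P]
    (hIndep : iIndepFun (fun n (ω : ℕ → Fin 6) => ω n) P)
    (hUnif : ∀ (n : ℕ) (i : Fin 6), P {ω | ω n = i} = 1 / 6) (A : Set ℕ) {s : ℕ}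
    (hs : s ∉ A) :
    hitExp P A s
      = 1 + (1 / 6 : ℝ≥0∞) * ∑ i ∈ Finset.range 6, hitExp P A (s + i + 1) := by
  rw [hitExp_formula P hIndep hUnif A s, tsum_eq_zero_add' ENNReal.summable]
  congr 1
  · rw [good_zero_card, if_neg hs]; simp
  have hsum : ∀ t : ℕ, ((good A s (t + 1)).card : ℝ≥0∞) * (1 / 6 : ℝ≥0∞) ^ (t + 1)
      = ∑ i ∈ Finset.range 6,
        (1 / 6 : ℝ≥0∞) * (((good A (s + i + 1) t).card : ℝ≥0∞) * (1 / 6 : ℝ≥0∞) ^ t) := by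
    intro t
    rw [good_card_succ A t hs, Fin.sum_univ_eq_sum_range
      (fun i => (good A (s + i + 1) t).card), Nat.cast_sum, Finset.sum_mul]
    refine Finset.sum_congr rfl fun i _ => ?_
    rw [pow_succ]
    ring
  rw [tsum_congr hsum, Summable.tsum_finsetSum fun i _ => ENNReal.summable]
  rw [Finset.mul_sum]
  exact Finset.sum_congr rfl fun i _ => by
    rw [ENNReal.tsum_mul_left, hitExp_formula P hIndep hUnif A (s + i + 1)]


lemma EC_nonneg (A : Set ℕ) (N : ℕ) (s : ℕ) : 0 ≤ EC A N 0 s := by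
  have key : ∀ d s, N + 1 - s ≤ d → 0 ≤ EC A N 0 s := by
    intro d
    induction d with
    | zero =>
      intro s hs
      rw [EC, if_pos (by omega)]
    | succ d ih =>
      intro s hs
      rw [EC]
      split_ifs with h1 h2
      · exact le_refl 0
      · exact le_refl 0
      · have hterm : ∀ i ∈ Finset.range 6, (0:ℝ) ≤ EC A N 0 (s + i + 1) := fun i hi =>
          ih _ (by omega)
        have := Finset.sum_nonneg hterm
        linarith
  exact key (N + 1) s (by omega)

lemma SP_nonneg (A : Set ℕ) (N : ℕ) (s : ℕ) : 0 ≤ SP A N s := by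
  have key : ∀ d s, N + 1 - s ≤ d → 0 ≤ SP A N s := by
    intro d
    induction d with
    | zero =>
      intro s hs
      rw [SP, if_pos (by omega)]
      norm_num
    | succ d ih =>
      intro s hs
      rw [SP]
      split_ifs with h1 h2
      · norm_num
      · exact le_refl 0
      · have hterm : ∀ i ∈ Finset.range 6, (0:ℝ) ≤ SP A N (s + i + 1) := fun i hi =>
          ih _ (by omega)
        have := Finset.sum_nonneg hterm
        linarith
  exact key (N + 1) s (by omega)

theorem squeeze_with_survival_aux
    (P : Measure (ℕ → Fin 6)) [IsProbabilityMeasure P]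
    (hIndep : iIndepFun (fun n (ω : ℕ → Fin 6) => ω n) P)
    (hUnif : ∀ (n : ℕ) (i : Fin 6), P {ω | ω n = i} = 1 / 6) (N : ℕ) (L U : ℝ) (hL : 0 ≤ L)
    (hLU : ∀ i : ℕ, 1 ≤ i → i ≤ 6 →
      ENNReal.ofReal L < hitExp P {n | n.Prime} (N + i) ∧
        hitExp P {n | n.Prime} (N + i) < ENNReal.ofReal U) :
    ENNReal.ofReal (EC {n | n.Prime} N 0 0 + L * SP {n | n.Prime} N 0)
        < hitExp P {n | n.Prime} 0 ∧
      hitExp P {n | n.Prime} 0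
        < ENNReal.ofReal (EC {n | n.Prime} N 0 0 + U * SP {n | n.Prime} N 0) := by
  classical
  set A : Set ℕ := {n | n.Prime} with hA
  have key : ∀ d s, N + 6 - s < d → s ≤ N + 6 →
      hitExp P A s ≠ ⊤ ∧
      EC A N 0 s + L * SP A N s ≤ (hitExp P A s).toReal ∧
      (hitExp P A s).toReal ≤ EC A N 0 s + U * SP A N s ∧
      ((¬ s.Prime ∨ N < s) →
        (EC A N 0 s + L * SP A N s < (hitExp P A s).toReal ∧
         (hitExp P A s).toReal < EC A N 0 s + U * SP A N s)) := by
    intro d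
    induction d with
    | zero => intro s h; omega
    | succ d ih =>
      intro s hd hs
      by_cases hNs : N < s
      · obtain ⟨hl, hu⟩ := hLU (s - N) (by omega) (by omega)
        rw [show N + (s - N) = s by omega] at hl hu
        have hne : hitExp P A s ≠ ⊤ := hu.ne_top
        have hEC : EC A N 0 s = 0 := by rw [EC, if_pos hNs]
        have hSP : SP A N s = 1 := by rw [SP, if_pos hNs]
        have hl' : L < (hitExp P A s).toReal := (ENNReal.ofReal_lt_iff_lt_toReal hL hne).1 hl
        have hu' : (hitExp P A s).toReal < U := (ENNReal.lt_ofReal_iff_toReal_lt hne).1 hu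
        rw [hEC, hSP]
        exact ⟨hne, by linarith, by linarith, fun _ => ⟨by linarith, by linarith⟩⟩
      · by_cases hp : s.Prime
        · have hz : hitExp P A s = 0 := hitExp_of_mem P A hp
          have hEC : EC A N 0 s = 0 := by rw [EC, if_neg hNs, if_pos (show s ∈ A from hp)]
          have hSP : SP A N s = 0 := by rw [SP, if_neg hNs, if_pos (show s ∈ A from hp)]
          rw [hz, hEC, hSP]
          refine ⟨by simp, by simp, by simp, fun h => ?_⟩
          rcases h with h | h
          · exact absurd hp h
          · omega
        · have hsA : s ∉ A := hp
          have hrec := hitExp_rec P hIndep hUnif A hsA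
          have hchild : ∀ i, i ∈ Finset.range 6 →
              hitExp P A (s + i + 1) ≠ ⊤ ∧
              EC A N 0 (s + i + 1) + L * SP A N (s + i + 1)
                ≤ (hitExp P A (s + i + 1)).toReal ∧
              (hitExp P A (s + i + 1)).toReal
                ≤ EC A N 0 (s + i + 1) + U * SP A N (s + i + 1) ∧
              ((¬ (s + i + 1).Prime ∨ N < s + i + 1) →
                (EC A N 0 (s + i + 1) + L * SP A N (s + i + 1)
                    < (hitExp P A (s + i + 1)).toReal ∧
                 (hitExp P A (s + i + 1)).toReal
                    < EC A N 0 (s + i + 1) + U * SP A N (s + i + 1))) := by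
            intro i hi
            have hi6 : i < 6 := Finset.mem_range.1 hi
            exact ih (s + i + 1) (by omega) (by omega)
          have hfin : ∀ i ∈ Finset.range 6, hitExp P A (s + i + 1) ≠ ⊤ := fun i hi =>
            (hchild i hi).1
          have hsumne : ∑ i ∈ Finset.range 6, hitExp P A (s + i + 1) ≠ ⊤ := by
            rw [← lt_top_iff_ne_top]
            exact ENNReal.sum_lt_top.2 fun i hi => lt_top_iff_ne_top.2 (hfin i hi)
          have hmulne : (1 / 6 : ℝ≥0∞) * ∑ i ∈ Finset.range 6, hitExp P A (s + i + 1) ≠ ⊤ :=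
            ENNReal.mul_ne_top (by norm_num) hsumne
          have hne : hitExp P A s ≠ ⊤ := by
            rw [hrec]
            exact ENNReal.add_ne_top.2 ⟨ENNReal.one_ne_top, hmulne⟩
          have hr : (hitExp P A s).toReal
              = 1 + (1/6 : ℝ) * ∑ i ∈ Finset.range 6, (hitExp P A (s + i + 1)).toReal := by
            rw [hrec, ENNReal.toReal_add ENNReal.one_ne_top hmulne, ENNReal.toReal_mul,
              ENNReal.toReal_sum hfin]
            norm_num
          have hECr : EC A N 0 s
              = 1 + (1/6 : ℝ) * ∑ i ∈ Finset.range 6, EC A N 0 (s + i + 1) := by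
            rw [EC, if_neg hNs, if_neg hsA]
          have hSPr : SP A N s
              = (1/6 : ℝ) * ∑ i ∈ Finset.range 6, SP A N (s + i + 1) := by
            rw [SP, if_neg hNs, if_neg hsA]
          have hle : ∀ i ∈ Finset.range 6,
              EC A N 0 (s + i + 1) + L * SP A N (s + i + 1)
                ≤ (hitExp P A (s + i + 1)).toReal := fun i hi => (hchild i hi).2.1
          have hge : ∀ i ∈ Finset.range 6,
              (hitExp P A (s + i + 1)).toReal
                ≤ EC A N 0 (s + i + 1) + U * SP A N (s + i + 1) := fun i hi =>
            (hchild i hi).2.2.1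
          have hi0 : 5 - s % 6 ∈ Finset.range 6 := Finset.mem_range.2 (by omega)
          have hm6 : ¬ (s + (5 - s % 6) + 1).Prime := by
            intro hp2
            have h2 : 2 ∣ s + (5 - s % 6) + 1 := by omega
            have hge6 : 6 ≤ s + (5 - s % 6) + 1 := by omega
            rcases hp2.eq_one_or_self_of_dvd 2 h2 with h | h <;> omega
          have hstrict := (hchild _ hi0).2.2.2 (Or.inl hm6)
          have hsumL : ∑ i ∈ Finset.range 6,
                (EC A N 0 (s + i + 1) + L * SP A N (s + i + 1))
              < ∑ i ∈ Finset.range 6, (hitExp P A (s + i + 1)).toReal :=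
            Finset.sum_lt_sum hle ⟨_, hi0, hstrict.1⟩
          have hsumU : ∑ i ∈ Finset.range 6, (hitExp P A (s + i + 1)).toReal
              < ∑ i ∈ Finset.range 6,
                (EC A N 0 (s + i + 1) + U * SP A N (s + i + 1)) :=
            Finset.sum_lt_sum hge ⟨_, hi0, hstrict.2⟩
          have hELS : EC A N 0 s + L * SP A N s
              = 1 + (1/6 : ℝ) * ∑ i ∈ Finset.range 6,
                  (EC A N 0 (s + i + 1) + L * SP A N (s + i + 1)) := by
            rw [hECr, hSPr, Finset.sum_add_distrib, ← Finset.mul_sum]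
            ring
          have hEUS : EC A N 0 s + U * SP A N s
              = 1 + (1/6 : ℝ) * ∑ i ∈ Finset.range 6,
                  (EC A N 0 (s + i + 1) + U * SP A N (s + i + 1)) := by
            rw [hECr, hSPr, Finset.sum_add_distrib, ← Finset.mul_sum]
            ring
          refine ⟨hne, ?_, ?_, fun _ => ⟨?_, ?_⟩⟩
          · rw [hELS, hr]; linarith
          · rw [hEUS, hr]; linarith
          · rw [hELS, hr]; linarith
          · rw [hEUS, hr]; linarith
  obtain ⟨hne, hlo, hhi, hstrict⟩ := key (N + 7) 0 (by omega) (by omega)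
  obtain ⟨hlt, hgt⟩ := hstrict (Or.inl Nat.not_prime_zero)
  have ha : 0 ≤ EC A N 0 0 + L * SP A N 0 :=
    add_nonneg (EC_nonneg A N 0) (mul_nonneg hL (SP_nonneg A N 0))
  have hr0pos : 0 < (hitExp P A 0).toReal := lt_of_le_of_lt ha hlt
  constructor
  · rw [← ENNReal.ofReal_toReal hne]
    exact (ENNReal.ofReal_lt_ofReal_iff hr0pos).2 hlt
  · rw [← ENNReal.ofReal_toReal hne]
    exact (ENNReal.ofReal_lt_ofReal_iff (by linarith)).2 hgt


end SqueezeAux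

/-- If `0 ≤ L < E[τ_{N+i}] < U` for all `1 ≤ i ≤ 6`, then
`E_{N,0}[τ_0] + L·SP_N(0) < E[τ] < E_{N,0}[τ_0] + U·SP_N(0)`,
where `A` is the set of primes.  In particular, `E[τ]` is approximated by
`E_{N,0}[τ_0]` with error at most `SP_N(0)·(U − L)`. -/
theorem squeeze_with_survival
    (P : Measure (ℕ → Fin 6)) [IsProbabilityMeasure P]
    (hIndep : iIndepFun (fun n (ω : ℕ → Fin 6) => ω n) P)
    (hUnif : ∀ (n : ℕ) (i : Fin 6), P {ω | ω n = i} = 1 / 6) (N : ℕ) (L U : ℝ) (hL : 0 ≤ L)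
    (hLU : ∀ i : ℕ, 1 ≤ i → i ≤ 6 →
      ENNReal.ofReal L < hitExp P {n | n.Prime} (N + i) ∧
        hitExp P {n | n.Prime} (N + i) < ENNReal.ofReal U) :
    ENNReal.ofReal (EC {n | n.Prime} N 0 0 + L * SP {n | n.Prime} N 0)
        < hitExp P {n | n.Prime} 0 ∧
      hitExp P {n | n.Prime} 0
        < ENNReal.ofReal (EC {n | n.Prime} N 0 0 + U * SP {n | n.Prime} N 0) :=
  SqueezeAux.squeeze_with_survival_aux P hIndep hUnif N L U hL hLU
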